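/- For x > 0 and ε > 0, r ∈ ℝ, define I₊(x,ε;r) = ∫₀^∞ e^{(ix-ε)sinh α + 2irα} cosh α dα and I₋(x,ε;r) = ∫₀^∞ e^{(-ix-ε)sinh α - 2irα} cosh α dα. Then both integrals converge absolutely, and lim_{ε→0⁺} (I₊(x,ε;r) + I₋(x,ε;r)) = -(4r/x) e^{-πr} K_{2ir}(x), where K_{2ir}(x) = ∫₀^∞ e^{-x cosh α} cosh(2irα) dα. -/

import Mathlib

open Real MeasureTheory Filter Topology

/-- The integrand of `I₊(x, ε; r)`. -/
noncomputable def Iplus (x ε r : ℝ) : ℂ :=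
  ∫ α in Set.Ioi (0 : ℝ),
    Complex.exp ((Complex.I * x - ε) * Real.sinh α + 2 * Complex.I * r * α) * Real.cosh α

/-- The integrand of `I₋(x, ε; r)`. -/
noncomputable def Iminus (x ε r : ℝ) : ℂ :=
  ∫ α in Set.Ioi (0 : ℝ),
    Complex.exp ((-(Complex.I * x) - ε) * Real.sinh α - 2 * Complex.I * r * α) * Real.cosh α


namespace Stmt17Aux

open Set Complex

/-- norm of the main integrand at a complex point `a + b*I`. -/
lemma norm_f (x ε r a b : ℝ) :
    ‖Complex.exp ((Complex.I*x - ε) * Complex.sinh (a + b*Complex.I) +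
        2*Complex.I*r*(a + b*Complex.I))‖
    = Real.exp (-(x * (Real.cosh a * Real.sin b)) - ε * (Real.sinh a * Real.cos b) - 2*r*b) := by
  rw [Complex.sinh_add, Complex.sinh_mul_I, Complex.cosh_mul_I, Complex.norm_exp]
  congr 1
  simp [Complex.add_re, Complex.mul_re, Complex.mul_im, Complex.sinh_ofReal_re,
    Complex.sinh_ofReal_im, Complex.cosh_ofReal_re, Complex.cosh_ofReal_im,
    Complex.cos_ofReal_re, Complex.sin_ofReal_re]
  ring

lemma norm_f_real (x ε r a : ℝ) :
    ‖Complex.exp ((Complex.I*x - ε) * (Real.sinh a : ℂ) + 2*Complex.I*r*(a:ℂ))‖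
    = Real.exp (-(ε * Real.sinh a)) := by
  have := norm_f x ε r a 0
  simp only [Complex.ofReal_zero, zero_mul, add_zero, Real.sin_zero, Real.cos_zero,
    mul_zero, mul_one, sub_zero, neg_zero, zero_sub] at this
  rw [Complex.ofReal_sinh]
  rw [this]

lemma tendsto_exp_neg_mul_sinh (m : ℝ) (hm : 0 < m) :
    Tendsto (fun R : ℝ => Real.exp (-(m * Real.sinh R))) atTop (𝓝 0) := by
  apply Real.tendsto_exp_atBot.comp
  apply tendsto_neg_atTop_atBot.comp
  apply Tendsto.const_mul_atTop hm
  apply tendsto_atTop_mono' _ _ tendsto_id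
  filter_upwards [eventually_ge_atTop (0:ℝ)] with y hy
  exact (Real.self_le_sinh_iff).2 hy

/-- generic integrability via an exponential bound -/
lemma integrableOn_of_bound {f : ℝ → ℂ} (b : ℝ) (hb : 0 < b)
    (hc : Continuous f) (h : ∀ α ∈ Ioi (0:ℝ), ‖f α‖ ≤ Real.exp (-b * α)) :
    IntegrableOn f (Ioi (0:ℝ)) := by
  refine Integrable.mono' (exp_neg_integrableOn_Ioi 0 hb)
    hc.aestronglyMeasurable.restrict ?_
  rw [ae_restrict_iff' measurableSet_Ioi]
  exact ae_of_all _ h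

/-- Integrability of the `J` integrand. -/
lemma integrable_J (x r : ℝ) {ε : ℝ} (hε : 0 < ε) :
    IntegrableOn (fun α : ℝ => Complex.exp ((Complex.I*x - ε) * (Real.sinh α : ℂ)
      + 2*Complex.I*r*(α:ℂ))) (Ioi 0) := by
  refine integrableOn_of_bound ε hε (by fun_prop) fun α hα => ?_
  rw [norm_f_real]
  apply Real.exp_le_exp.2
  have h1 : α ≤ Real.sinh α := Real.self_le_sinh_iff.2 (le_of_lt hα)
  nlinarith [hε.le]

/-- Integrability of the `Iplus` integrand. -/
lemma integrable_Iplus (x r : ℝ) {ε : ℝ} (hε : 0 < ε) :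
    IntegrableOn (fun α : ℝ => Complex.exp ((Complex.I*x - ε) * (Real.sinh α : ℂ)
      + 2*Complex.I*r*(α:ℂ)) * (Real.cosh α : ℂ)) (Ioi 0) := by
  have hbound : IntegrableOn (fun α : ℝ => Real.exp (-(ε * Real.sinh α)) * Real.cosh α)
      (Ioi (0:ℝ)) := by
    apply integrableOn_Ioi_deriv_of_nonneg'
      (g := fun α : ℝ => -(1/ε) * Real.exp (-(ε * Real.sinh α))) (l := 0)
    · intro a _
      have h1 : HasDerivAt (fun α : ℝ => -(ε * Real.sinh α)) (-(ε * Real.cosh a)) a := by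
        exact ((Real.hasDerivAt_sinh a).const_mul ε).neg
      have h2 := (h1.exp).const_mul (-(1/ε))
      refine h2.congr_deriv ?_
      field_simp
    · intro a _
      positivity
    · have := (tendsto_exp_neg_mul_sinh ε hε).const_mul (-(1/ε))
      simpa using this
  have hcont : Continuous fun α : ℝ => Complex.exp ((Complex.I*x - ε) * (Real.sinh α : ℂ)
      + 2*Complex.I*r*(α:ℂ)) * (Real.cosh α : ℂ) := by fun_prop
  refine Integrable.mono' hbound hcont.aestronglyMeasurable.restrict ?_
  rw [ae_restrict_iff' measurableSet_Ioi]
  refine ae_of_all _ fun α _ => ?_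
  rw [norm_mul, norm_f_real, Complex.norm_real, Real.norm_eq_abs,
    abs_of_pos (Real.cosh_pos α)]

/-- Integrability of the `Htop` integrand (and its conjugate-type variants). -/
lemma integrable_Htop (r : ℝ) {x : ℝ} (hx : 0 < x) (ε s : ℝ) :
    IntegrableOn (fun α : ℝ => Complex.exp ((-(x:ℂ) - Complex.I*ε) * (Real.cosh α : ℂ)
      + s * (2*Complex.I*r*(α:ℂ)))) (Ioi 0) := by
  refine integrableOn_of_bound x hx (by fun_prop) fun α hα => ?_
  rw [Complex.norm_exp]
  apply Real.exp_le_exp.2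
  have : ((-(x:ℂ) - Complex.I*ε) * (Real.cosh α : ℂ) + s * (2*Complex.I*r*(α:ℂ))).re
      = -x * Real.cosh α := by
    simp [Complex.mul_re, Complex.mul_im]
  rw [this]
  have h1 : α ≤ Real.sinh α := Real.self_le_sinh_iff.2 (le_of_lt hα)
  have h2 : Real.sinh α ≤ Real.cosh α := (Real.sinh_lt_cosh α).le
  nlinarith


lemma f_top (x ε r t : ℝ) :
    Complex.exp ((Complex.I*x - ε) * Complex.sinh ((t:ℂ) + (π/2 : ℝ)*Complex.I)
      + 2*Complex.I*r*((t:ℂ) + (π/2 : ℝ)*Complex.I))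
    = Complex.exp (-(π*r)) * Complex.exp ((-(x:ℂ) - Complex.I*ε) * (Real.cosh t : ℂ)
        + 2*Complex.I*r*(t:ℂ)) := by
  rw [Complex.sinh_add, Complex.sinh_mul_I, Complex.cosh_mul_I, ← Complex.exp_add,
    ← Complex.ofReal_sin, ← Complex.ofReal_cos, Real.sin_pi_div_two, Real.cos_pi_div_two]
  congr 1
  simp only [Complex.ofReal_cosh, Complex.ofReal_sinh, Complex.ofReal_one, Complex.ofReal_zero,
    Complex.ofReal_div, Complex.ofReal_ofNat]
  linear_combination ((x:ℂ) * Complex.cosh (t:ℂ) + π*r) * Complex.I_mul_I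

lemma f_left (x ε r y : ℝ) :
    Complex.exp ((Complex.I*x - ε) * Complex.sinh ((y:ℂ)*Complex.I)
      + 2*Complex.I*r*((y:ℂ)*Complex.I))
    = Complex.exp ((-(x:ℂ) - Complex.I*ε) * (Real.sin y : ℂ) - 2*r*(y:ℂ)) := by
  rw [Complex.sinh_mul_I, ← Complex.ofReal_sin]
  congr 1
  linear_combination ((x:ℂ) * Real.sin y + 2*r*y) * Complex.I_mul_I

lemma integrable_Hplus (r : ℝ) {x : ℝ} (hx : 0 < x) (ε : ℝ) :
    IntegrableOn (fun α : ℝ => Complex.exp ((-(x:ℂ) - Complex.I*ε) * (Real.cosh α : ℂ)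
      + 2*Complex.I*r*(α:ℂ))) (Ioi 0) := by
  have := integrable_Htop r hx ε 1
  simpa using this

lemma integrable_Hminus (r : ℝ) {x : ℝ} (hx : 0 < x) :
    IntegrableOn (fun α : ℝ => Complex.exp (-(x:ℂ) * (Real.cosh α : ℂ)
      - 2*Complex.I*r*(α:ℂ))) (Ioi 0) := by
  have := integrable_Htop r hx 0 (-1)
  refine this.congr_fun (fun α _ => ?_) measurableSet_Ioi
  push_cast
  ring_nf

lemma contour (r : ℝ) {x ε : ℝ} (hx : 0 < x) (hε : 0 < ε) :
    (∫ α in Ioi (0:ℝ), Complex.exp ((Complex.I*x - ε) * (Real.sinh α:ℂ) + 2*Complex.I*r*(α:ℂ)))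
    = Complex.exp (-(π*r)) *
        (∫ α in Ioi (0:ℝ), Complex.exp ((-(x:ℂ) - Complex.I*ε) * (Real.cosh α:ℂ)
          + 2*Complex.I*r*(α:ℂ)))
      + Complex.I * ∫ t in (0:ℝ)..(π/2), Complex.exp ((-(x:ℂ) - Complex.I*ε) * (Real.sin t:ℂ)
          - 2*r*(t:ℂ)) := by
  set f : ℂ → ℂ := fun z => Complex.exp ((Complex.I*x - ε) * Complex.sinh z + 2*Complex.I*r*z)
    with hf
  have hrect : ∀ R : ℝ, (∫ t in (0:ℝ)..R, f t) =
      (∫ t in (0:ℝ)..R, f ((t:ℂ) + (π/2 : ℝ)*Complex.I))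
      + Complex.I • (∫ y in (0:ℝ)..(π/2), f ((y:ℂ)*Complex.I))
      - Complex.I • (∫ y in (0:ℝ)..(π/2), f ((R:ℂ) + (y:ℂ)*Complex.I)) := by
    intro R
    have hdiff : Differentiable ℂ f := by
      apply Differentiable.cexp
      exact (Complex.differentiable_sinh.const_mul _).add (differentiable_id.const_mul _)
    have h0 := Complex.integral_boundary_rect_eq_zero_of_differentiableOn f 0
      ((R:ℂ) + (π/2 : ℝ)*Complex.I) hdiff.differentiableOn
    simp only [Complex.zero_re, Complex.zero_im, Complex.add_re, Complex.add_im,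
      Complex.ofReal_re, Complex.ofReal_im, Complex.mul_re, Complex.mul_im,
      Complex.I_re, Complex.I_im, mul_zero, mul_one, zero_mul, zero_sub, sub_zero,
      zero_add, add_zero, neg_zero, Complex.ofReal_zero] at h0
    linear_combination h0
  -- limits as R → ∞
  have hA : Tendsto (fun R : ℝ => ∫ t in (0:ℝ)..R, f t) atTop
      (𝓝 (∫ α in Ioi (0:ℝ), Complex.exp ((Complex.I*x - ε) * (Real.sinh α:ℂ)
        + 2*Complex.I*r*(α:ℂ)))) := by
    have h1 := intervalIntegral_tendsto_integral_Ioi 0 (integrable_J x r hε) tendsto_id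
    refine h1.congr (fun R => ?_)
    refine intervalIntegral.integral_congr (fun t _ => ?_)
    rw [hf]
    norm_num [← Complex.ofReal_sinh]
  have hB : Tendsto (fun R : ℝ => ∫ t in (0:ℝ)..R, f ((t:ℂ) + (π/2 : ℝ)*Complex.I)) atTop
      (𝓝 (Complex.exp (-(π*r)) * (∫ α in Ioi (0:ℝ),
        Complex.exp ((-(x:ℂ) - Complex.I*ε) * (Real.cosh α:ℂ) + 2*Complex.I*r*(α:ℂ))))) := by
    have h1 := (intervalIntegral_tendsto_integral_Ioi 0 (integrable_Hplus r hx ε)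
      tendsto_id).const_mul (Complex.exp (-(π*r)))
    refine h1.congr (fun R => ?_)
    rw [← intervalIntegral.integral_const_mul]
    exact intervalIntegral.integral_congr (fun t _ => (f_top x ε r t).symm)
  have hD : Tendsto (fun R : ℝ => ∫ y in (0:ℝ)..(π/2), f ((R:ℂ) + (y:ℂ)*Complex.I)) atTop
      (𝓝 0) := by
    set m : ℝ := min x ε with hm
    have hm0 : 0 < m := lt_min hx hε
    apply squeeze_zero_norm' (a := fun R : ℝ =>
      Real.exp (2 * |r| * π) * Real.exp (-(m * Real.sinh R)) * (π/2))
    · filter_upwards [eventually_ge_atTop (0:ℝ)] with R hR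
      have hb : ∀ y ∈ Set.uIoc (0:ℝ) (π/2), ‖f ((R:ℂ) + (y:ℂ)*Complex.I)‖ ≤
          Real.exp (2 * |r| * π) * Real.exp (-(m * Real.sinh R)) := by
        intro y hy
        rw [Set.uIoc_of_le (by positivity)] at hy
        obtain ⟨hy0, hy1⟩ := hy
        rw [hf, norm_f, ← Real.exp_add]
        apply Real.exp_le_exp.2
        have hsy : 0 ≤ Real.sin y := Real.sin_nonneg_of_nonneg_of_le_pi hy0.le
          (hy1.trans (by linarith [Real.pi_pos]))
        have hcy : 0 ≤ Real.cos y := Real.cos_nonneg_of_mem_Icc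
          ⟨by linarith [Real.pi_pos], hy1⟩
        have hsc : 1 ≤ Real.sin y + Real.cos y := by
          nlinarith [Real.sin_sq_add_cos_sq y, Real.sin_le_one y, Real.cos_le_one y]
        have hshR : 0 ≤ Real.sinh R := Real.sinh_nonneg_iff.2 hR
        have hch : Real.sinh R ≤ Real.cosh R := (Real.sinh_lt_cosh R).le
        have t1 : m * Real.sinh R * Real.sin y ≤ x * (Real.cosh R * Real.sin y) := by
          have : m * Real.sinh R ≤ x * Real.cosh R :=
            mul_le_mul (min_le_left x ε) hch hshR hx.le
          nlinarith
        have t2 : m * Real.sinh R * Real.cos y ≤ ε * (Real.sinh R * Real.cos y) := by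
          have : m * Real.sinh R ≤ ε * Real.sinh R :=
            mul_le_mul_of_nonneg_right (min_le_right x ε) hshR
          nlinarith
        have t3 : m * Real.sinh R ≤ m * Real.sinh R * Real.sin y
            + m * Real.sinh R * Real.cos y := by
          nlinarith [mul_nonneg hm0.le hshR]
        have t4 : -(2*r*y) ≤ 2 * |r| * π := by
          have h5 : -(2*r*y) ≤ 2 * |r| * y := by nlinarith [neg_abs_le r, le_abs_self r]
          have h6 : 2 * |r| * y ≤ 2 * |r| * π := by
            have := abs_nonneg r
            nlinarith [Real.pi_pos]
          linarith
        linarith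
      have := intervalIntegral.norm_integral_le_of_norm_le_const hb
      calc ‖∫ y in (0:ℝ)..(π/2), f ((R:ℂ) + (y:ℂ)*Complex.I)‖
          ≤ Real.exp (2 * |r| * π) * Real.exp (-(m * Real.sinh R)) * |π/2 - 0| := this
        _ = Real.exp (2 * |r| * π) * Real.exp (-(m * Real.sinh R)) * (π/2) := by
            rw [sub_zero, abs_of_pos (by linarith [Real.pi_pos] : (0:ℝ) < π/2)]
    · have := ((tendsto_exp_neg_mul_sinh m hm0).const_mul (Real.exp (2 * |r| * π))).mul_const (π/2)
      simpa using this
  have hC : (∫ y in (0:ℝ)..(π/2), f ((y:ℂ)*Complex.I)) =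
      ∫ t in (0:ℝ)..(π/2), Complex.exp ((-(x:ℂ) - Complex.I*ε) * (Real.sin t:ℂ)
        - 2*r*(t:ℂ)) :=
    intervalIntegral.integral_congr (fun t _ => f_left x ε r t)
  have hlim : Tendsto (fun R : ℝ => ∫ t in (0:ℝ)..R, f t) atTop
      (𝓝 ((Complex.exp (-(π*r)) * (∫ α in Ioi (0:ℝ),
        Complex.exp ((-(x:ℂ) - Complex.I*ε) * (Real.cosh α:ℂ) + 2*Complex.I*r*(α:ℂ)))
        + Complex.I • (∫ y in (0:ℝ)..(π/2), f ((y:ℂ)*Complex.I))) - Complex.I • (0:ℂ))) := by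
    refine Tendsto.congr (fun R => (hrect R).symm) ?_
    exact (hB.add tendsto_const_nhds).sub (hD.const_smul Complex.I)
  have := tendsto_nhds_unique hA hlim
  rw [this, hC]
  simp [smul_eq_mul]

/-- `Ht x r ε` : the shifted horizontal integral. -/
noncomputable def Ht (x r ε : ℝ) : ℂ :=
  ∫ α in Ioi (0:ℝ), Complex.exp ((-(x:ℂ) - Complex.I*ε) * (Real.cosh α:ℂ)
    + 2*Complex.I*r*(α:ℂ))

/-- `Vl x r ε` : the vertical segment integral. -/
noncomputable def Vl (x r ε : ℝ) : ℂ :=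
  ∫ t in (0:ℝ)..(π/2), Complex.exp ((-(x:ℂ) - Complex.I*ε) * (Real.sin t:ℂ) - 2*r*(t:ℂ))

lemma norm_H (x ε r α : ℝ) :
    ‖Complex.exp ((-(x:ℂ) - Complex.I*ε) * (Real.cosh α:ℂ) + 2*Complex.I*r*(α:ℂ))‖
    = Real.exp (-x * Real.cosh α) := by
  rw [Complex.norm_exp]
  congr 1
  simp [Complex.mul_re, Complex.mul_im]

lemma tendsto_Ht (r : ℝ) {x : ℝ} (hx : 0 < x) :
    Tendsto (fun ε : ℝ => Ht x r ε) (nhdsWithin 0 (Ioi 0)) (𝓝 (Ht x r 0)) := by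
  apply tendsto_integral_filter_of_dominated_convergence
    (bound := fun α : ℝ => Real.exp (-x * Real.cosh α))
  · refine Eventually.of_forall (fun ε => ?_)
    exact (Continuous.aestronglyMeasurable (by fun_prop)).restrict
  · refine Eventually.of_forall (fun ε => ae_of_all _ (fun α => ?_))
    rw [norm_H]
  · have hcont : Continuous fun α : ℝ => Real.exp (-x * Real.cosh α) := by fun_prop
    refine Integrable.mono' (exp_neg_integrableOn_Ioi 0 hx)
      hcont.aestronglyMeasurable.restrict ?_
    rw [ae_restrict_iff' measurableSet_Ioi]
    refine ae_of_all _ fun α hα => ?_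
    rw [Real.norm_eq_abs, abs_of_pos (Real.exp_pos _)]
    apply Real.exp_le_exp.2
    have h1 : α ≤ Real.sinh α := Real.self_le_sinh_iff.2 (le_of_lt hα)
    have h2 : Real.sinh α ≤ Real.cosh α := (Real.sinh_lt_cosh α).le
    nlinarith
  · refine ae_of_all _ fun α => ?_
    have hcont : Continuous fun ε : ℝ =>
        Complex.exp ((-(x:ℂ) - Complex.I*ε) * (Real.cosh α:ℂ) + 2*Complex.I*r*(α:ℂ)) := by
      fun_prop
    exact (hcont.tendsto 0).mono_left nhdsWithin_le_nhds

lemma tendsto_Vl (r : ℝ) {x : ℝ} (hx : 0 < x) :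
    Tendsto (fun ε : ℝ => Vl x r ε) (nhdsWithin 0 (Ioi 0)) (𝓝 (Vl x r 0)) := by
  apply intervalIntegral.tendsto_integral_filter_of_dominated_convergence
    (bound := fun _ : ℝ => Real.exp (2 * |r| * π))
  · refine Eventually.of_forall (fun ε => ?_)
    exact (Continuous.aestronglyMeasurable (by fun_prop)).restrict
  · refine Eventually.of_forall (fun ε => ae_of_all _ (fun t ht => ?_))
    rw [Set.uIoc_of_le (by positivity)] at ht
    obtain ⟨ht0, ht1⟩ := ht
    rw [Complex.norm_exp]
    apply Real.exp_le_exp.2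
    have hre : ((-(x:ℂ) - Complex.I*ε) * (Real.sin t:ℂ) - 2*r*(t:ℂ)).re
        = -x * Real.sin t - 2*r*t := by
      simp [Complex.mul_re, Complex.mul_im, Complex.sin_ofReal_re]
    rw [hre]
    have hst : 0 ≤ Real.sin t := Real.sin_nonneg_of_nonneg_of_le_pi ht0.le
      (ht1.trans (by linarith [Real.pi_pos]))
    have h5 : -(2*r*t) ≤ 2 * |r| * t := by nlinarith [neg_abs_le r, le_abs_self r]
    have h6 : 2 * |r| * t ≤ 2 * |r| * π := by
      have := abs_nonneg r
      nlinarith [Real.pi_pos]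
    nlinarith [mul_nonneg hx.le hst]
  · exact intervalIntegrable_const
  · refine ae_of_all _ fun t => fun _ => ?_
    have hcont : Continuous fun ε : ℝ =>
        Complex.exp ((-(x:ℂ) - Complex.I*ε) * (Real.sin t:ℂ) - 2*r*(t:ℂ)) := by
      fun_prop
    exact (hcont.tendsto 0).mono_left nhdsWithin_le_nhds

end Stmt17Aux


namespace Stmt17Aux

open Set Complex

lemma Iplus_eq (r : ℝ) {x ε : ℝ} (hε : 0 < ε) :
    Iplus x ε r = -(Complex.I*x - (ε:ℂ))⁻¹ - (2*Complex.I*r * (Complex.I*x - (ε:ℂ))⁻¹) *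
      ∫ α in Ioi (0:ℝ), Complex.exp ((Complex.I*x - ε) * (Real.sinh α:ℂ)
        + 2*Complex.I*r*(α:ℂ)) := by
  set c : ℂ := Complex.I*x - (ε:ℂ) with hcdef
  have hcre : c.re = -ε := by simp [hcdef]
  have hc : c ≠ 0 := by
    intro h
    rw [h] at hcre
    simp only [Complex.zero_re] at hcre
    exact absurd hcre.symm (by simpa using hε.ne')
  set u : ℝ → ℂ := fun t => Complex.exp (2*Complex.I*r*(t:ℂ)) with hu
  set v : ℝ → ℂ := fun t => Complex.exp (c * (Real.sinh t : ℂ)) * c⁻¹ with hv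
  set u' : ℝ → ℂ := fun t => (2*Complex.I*r) * Complex.exp (2*Complex.I*r*(t:ℂ)) with hu'
  set v' : ℝ → ℂ := fun t => Complex.exp (c * (Real.sinh t:ℂ)) * (Real.cosh t : ℂ) with hv'
  have hud : ∀ t ∈ Ioi (0:ℝ), HasDerivAt u (u' t) t := by
    intro t _
    have h1 : HasDerivAt (fun s : ℝ => 2*Complex.I*r*(s:ℂ)) (2*Complex.I*r) t := by
      simpa using (Complex.ofRealCLM.hasDerivAt (x := t)).const_mul (2*Complex.I*r)
    have h2 := h1.cexp
    rw [hu, hu']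
    convert h2 using 1
    ring
  have hvd : ∀ t ∈ Ioi (0:ℝ), HasDerivAt v (v' t) t := by
    intro t _
    have h1 : HasDerivAt (fun s : ℝ => (Real.sinh s : ℂ)) ((Real.cosh t : ℂ)) t :=
      (Real.hasDerivAt_sinh t).ofReal_comp
    have h2 := ((h1.const_mul c).cexp).mul_const c⁻¹
    refine h2.congr_deriv ?_
    rw [hv']
    field_simp
  have hint1 : IntegrableOn (u * v') (Ioi (0:ℝ)) := by
    refine (integrable_Iplus x r hε).congr_fun (fun t _ => ?_) measurableSet_Ioi
    simp only [Pi.mul_apply, hu, hv', Complex.exp_add, hcdef]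
    ring
  have hint2 : IntegrableOn (u' * v) (Ioi (0:ℝ)) := by
    have hbase : IntegrableOn (fun t : ℝ => (2*Complex.I*r*c⁻¹) *
        Complex.exp ((Complex.I*x - ε) * (Real.sinh t:ℂ) + 2*Complex.I*r*(t:ℂ)))
        (Ioi (0:ℝ)) := (integrable_J x r hε).const_mul _
    refine hbase.congr_fun (fun t _ => ?_) measurableSet_Ioi
    simp only [Pi.mul_apply, hu', hv, Complex.exp_add, hcdef] <;> ring_nf
  have hzero : Tendsto (u * v) (nhdsWithin 0 (Ioi (0:ℝ))) (𝓝 (c⁻¹)) := by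
    have hcont : Continuous (u * v) := by
      apply Continuous.mul <;> fun_prop
    have h9 : Tendsto (u * v) (nhdsWithin 0 (Ioi (0:ℝ))) (𝓝 ((u * v) 0)) :=
      (hcont.tendsto 0).mono_left nhdsWithin_le_nhds
    simpa [hu, hv, Real.sinh_zero] using h9
  have hinf : Tendsto (u * v) atTop (𝓝 0) := by
    apply squeeze_zero_norm (a := fun t => Real.exp (-(ε * Real.sinh t)) * ‖(c⁻¹ : ℂ)‖)
    · intro t
      have heq : (u * v) t = Complex.exp ((Complex.I*x - (ε:ℂ)) * (Real.sinh t:ℂ)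
          + 2*Complex.I*r*(t:ℂ)) * c⁻¹ := by
        simp only [Pi.mul_apply, hu, hv, Complex.exp_add, hcdef]
        ring
      rw [heq, norm_mul, norm_f_real]
    · simpa using (tendsto_exp_neg_mul_sinh ε hε).mul_const ‖(c⁻¹ : ℂ)‖
  have key := integral_Ioi_mul_deriv_eq_deriv_mul hud hvd hint1 hint2 hzero hinf
  have hIl : Iplus x ε r = ∫ t in Ioi (0:ℝ), u t * v' t := by
    rw [Iplus]
    refine setIntegral_congr_fun measurableSet_Ioi (fun t _ => ?_)
    simp only [hu, hv', Complex.exp_add, hcdef]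
    ring
  have hJ : (∫ t in Ioi (0:ℝ), u' t * v t) = (2*Complex.I*r*c⁻¹) *
      ∫ α in Ioi (0:ℝ), Complex.exp ((Complex.I*x - ε) * (Real.sinh α:ℂ)
        + 2*Complex.I*r*(α:ℂ)) := by
    rw [← integral_const_mul]
    refine setIntegral_congr_fun measurableSet_Ioi (fun t _ => ?_)
    simp only [hu', hv, Complex.exp_add, hcdef]
    ring
  rw [hIl, key, hJ]
  ring

lemma Iminus_eq_conj (x ε r : ℝ) : Iminus x ε r = (starRingEnd ℂ) (Iplus x ε r) := by
  rw [Iplus, Iminus, ← integral_conj]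
  refine integral_congr_ae (Eventually.of_forall (fun α => ?_))
  dsimp only
  rw [map_mul, ← Complex.exp_conj, Complex.conj_ofReal]
  congr 1
  simp only [map_add, map_sub, map_mul, Complex.conj_I, Complex.conj_ofReal, map_ofNat]
  ring

/-- The limit value of `Iplus`. -/
noncomputable def L (x r : ℝ) : ℂ :=
  -(Complex.I*(x:ℂ))⁻¹ - (2*Complex.I*r * (Complex.I*(x:ℂ))⁻¹) *
    (Complex.exp (-(π*r)) * Ht x r 0 + Complex.I * Vl x r 0)

lemma tendsto_Iplus (r : ℝ) {x : ℝ} (hx : 0 < x) :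
    Tendsto (fun ε : ℝ => Iplus x ε r) (nhdsWithin 0 (Ioi 0)) (𝓝 (L x r)) := by
  have hne : (Complex.I * (x:ℂ)) ≠ 0 :=
    mul_ne_zero Complex.I_ne_zero (Complex.ofReal_ne_zero.2 hx.ne')
  have hc : Tendsto (fun ε : ℝ => (Complex.I*(x:ℂ) - (ε:ℂ))⁻¹) (nhdsWithin 0 (Ioi 0))
      (𝓝 (Complex.I*(x:ℂ))⁻¹) := by
    have hcont : Continuous fun ε : ℝ => Complex.I*(x:ℂ) - (ε:ℂ) := by fun_prop
    have h1 : Tendsto (fun ε : ℝ => Complex.I*(x:ℂ) - (ε:ℂ)) (𝓝 0) (𝓝 (Complex.I*x)) := by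
      simpa using hcont.tendsto 0
    exact (h1.mono_left nhdsWithin_le_nhds).inv₀ hne
  have hJ : Tendsto (fun ε : ℝ => Complex.exp (-(π*r)) * Ht x r ε + Complex.I * Vl x r ε)
      (nhdsWithin 0 (Ioi 0))
      (𝓝 (Complex.exp (-(π*r)) * Ht x r 0 + Complex.I * Vl x r 0)) :=
    ((tendsto_Ht r hx).const_mul _).add ((tendsto_Vl r hx).const_mul _)
  have hmain := (hc.neg).sub ((hc.const_mul (2*Complex.I*r)).mul hJ)
  rw [L]
  refine Tendsto.congr' ?_ hmain
  filter_upwards [self_mem_nhdsWithin] with ε (hε : ε ∈ Ioi 0)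
  rw [Iplus_eq r hε, contour r hx hε, Ht, Vl]

lemma Ht0_eq (x r : ℝ) : Ht x r 0 = ∫ α in Ioi (0:ℝ),
    Complex.exp (-(x:ℂ) * (Real.cosh α:ℂ) + 2*Complex.I*r*(α:ℂ)) := by
  rw [Ht]
  refine integral_congr_ae (Eventually.of_forall fun α => ?_)
  norm_num

lemma conj_Ht (x r : ℝ) : (starRingEnd ℂ) (Ht x r 0) = ∫ α in Ioi (0:ℝ),
    Complex.exp (-(x:ℂ) * (Real.cosh α:ℂ) - 2*Complex.I*r*(α:ℂ)) := by
  rw [Ht0_eq, ← integral_conj]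
  refine integral_congr_ae (Eventually.of_forall fun α => ?_)
  dsimp only
  rw [← Complex.exp_conj]
  congr 1
  simp only [map_add, map_sub, map_mul, map_neg, Complex.conj_I, Complex.conj_ofReal, map_ofNat]
  ring

lemma conj_Vl (x r : ℝ) : (starRingEnd ℂ) (Vl x r 0) = Vl x r 0 := by
  have h : Vl x r 0 = ((∫ t in (0:ℝ)..(π/2), Real.exp (-x * Real.sin t - 2*r*t) : ℝ) : ℂ) := by
    rw [Vl, ← intervalIntegral.integral_ofReal]
    refine intervalIntegral.integral_congr fun t _ => ?_
    rw [Complex.ofReal_exp]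
    congr 1
    push_cast
    ring
  rw [h, Complex.conj_ofReal]

lemma K_eq (r : ℝ) {x : ℝ} (hx : 0 < x) :
    (∫ α in Ioi (0:ℝ), Complex.exp (-(x:ℂ) * (Real.cosh α:ℂ))
      * Complex.cosh (2*Complex.I*r*(α:ℂ)))
    = (Ht x r 0 + (starRingEnd ℂ) (Ht x r 0)) / 2 := by
  have h1 : IntegrableOn (fun α : ℝ => Complex.exp (-(x:ℂ) * (Real.cosh α:ℂ)
      + 2*Complex.I*r*(α:ℂ))) (Ioi 0) := by
    have := integrable_Hplus r hx 0
    refine this.congr_fun (fun α _ => ?_) measurableSet_Ioi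
    norm_num
  have h2 : IntegrableOn (fun α : ℝ => Complex.exp (-(x:ℂ) * (Real.cosh α:ℂ)
      - 2*Complex.I*r*(α:ℂ))) (Ioi 0) := integrable_Hminus r hx
  rw [conj_Ht, Ht0_eq, ← integral_add h1 h2]
  rw [eq_div_iff (two_ne_zero), ← integral_mul_const]
  refine integral_congr_ae (Eventually.of_forall fun α => ?_)
  have h3 := Complex.two_cosh (2*Complex.I*r*(α:ℂ))
  dsimp only
  rw [Complex.exp_add, sub_eq_add_neg, Complex.exp_add]
  linear_combination Complex.exp (-(x:ℂ) * (Real.cosh α:ℂ)) * h3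

lemma norm_f_real_neg (x ε r a : ℝ) :
    ‖Complex.exp ((-(Complex.I*x) - ε) * (Real.sinh a : ℂ) - 2*Complex.I*r*(a:ℂ))‖
    = Real.exp (-(ε * Real.sinh a)) := by
  rw [Complex.norm_exp]
  congr 1
  simp [Complex.mul_re, Complex.mul_im, Complex.sinh_ofReal_re, Complex.sinh_ofReal_im]

lemma integrable_Iminus (x r : ℝ) {ε : ℝ} (hε : 0 < ε) :
    IntegrableOn (fun α : ℝ => Complex.exp ((-(Complex.I * x) - ε) * (Real.sinh α : ℂ)
      - 2 * Complex.I * r * (α:ℂ)) * (Real.cosh α : ℂ)) (Ioi 0) := by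
  have hbound : IntegrableOn (fun α : ℝ => Real.exp (-(ε * Real.sinh α)) * Real.cosh α)
      (Ioi (0:ℝ)) := by
    apply integrableOn_Ioi_deriv_of_nonneg'
      (g := fun α : ℝ => -(1/ε) * Real.exp (-(ε * Real.sinh α))) (l := 0)
    · intro a _
      have h1 : HasDerivAt (fun α : ℝ => -(ε * Real.sinh α)) (-(ε * Real.cosh a)) a := by
        exact ((Real.hasDerivAt_sinh a).const_mul ε).neg
      have h2 := (h1.exp).const_mul (-(1/ε))
      refine h2.congr_deriv ?_
      field_simp
    · intro a _
      positivity
    · have := (tendsto_exp_neg_mul_sinh ε hε).const_mul (-(1/ε))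
      simpa using this
  have hcont : Continuous fun α : ℝ => Complex.exp ((-(Complex.I * x) - ε) * (Real.sinh α : ℂ)
      - 2 * Complex.I * r * (α:ℂ)) * (Real.cosh α : ℂ) := by fun_prop
  refine Integrable.mono' hbound hcont.aestronglyMeasurable.restrict ?_
  rw [ae_restrict_iff' measurableSet_Ioi]
  refine ae_of_all _ fun α _ => ?_
  rw [norm_mul, norm_f_real_neg, Complex.norm_real, Real.norm_eq_abs,
    abs_of_pos (Real.cosh_pos α)]

end Stmt17Aux

theorem stmt_17 (x r : ℝ) (hx : 0 < x) :
    (∀ ε : ℝ, 0 < ε →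
      IntegrableOn (fun α : ℝ =>
        Complex.exp ((Complex.I * x - ε) * Real.sinh α + 2 * Complex.I * r * α) *
          Real.cosh α) (Set.Ioi 0) ∧
      IntegrableOn (fun α : ℝ =>
        Complex.exp ((-(Complex.I * x) - ε) * Real.sinh α - 2 * Complex.I * r * α) *
          Real.cosh α) (Set.Ioi 0)) ∧
    Tendsto (fun ε : ℝ => Iplus x ε r + Iminus x ε r) (nhdsWithin 0 (Set.Ioi 0))
      (nhds (-(4 * r / x) * Real.exp (-π * r) *
        ∫ α in Set.Ioi (0 : ℝ),
          Complex.exp (-x * Real.cosh α) * Complex.cosh (2 * Complex.I * r * α))) := by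
  constructor
  · intro ε hε
    exact ⟨Stmt17Aux.integrable_Iplus x r hε, Stmt17Aux.integrable_Iminus x r hε⟩
  · have hplus := Stmt17Aux.tendsto_Iplus r hx
    have hstar : Tendsto (fun ε : ℝ => Iminus x ε r) (nhdsWithin 0 (Set.Ioi 0))
        (𝓝 ((starRingEnd ℂ) (Stmt17Aux.L x r))) := by
      simp_rw [Stmt17Aux.Iminus_eq_conj]
      exact (Complex.continuous_conj.tendsto _).comp hplus
    have hsum := hplus.add hstar
    have heq : -(4 * r / x) * ((Real.exp (-π * r) : ℝ) : ℂ) *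
        (∫ α in Set.Ioi (0:ℝ), Complex.exp (-x * Real.cosh α)
          * Complex.cosh (2 * Complex.I * r * α))
        = Stmt17Aux.L x r + (starRingEnd ℂ) (Stmt17Aux.L x r) := by
      have hx' : (x:ℂ) ≠ 0 := Complex.ofReal_ne_zero.2 hx.ne'
      rw [Stmt17Aux.K_eq r hx, Stmt17Aux.L]
      simp only [map_sub, map_neg, map_mul, map_add, map_inv₀, Complex.conj_I,
        Complex.conj_ofReal, map_ofNat, Stmt17Aux.conj_Vl, ← Complex.exp_conj]
      simp only [Stmt17Aux.conj_Ht]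
      simp only [Stmt17Aux.Ht0_eq, Complex.ofReal_exp, Complex.ofReal_neg,
        Complex.ofReal_mul]
      set Hp : ℂ := ∫ α in Set.Ioi (0:ℝ),
        Complex.exp (-(x:ℂ) * (Real.cosh α:ℂ) + 2*Complex.I*r*(α:ℂ)) with hHp
      set Hm : ℂ := ∫ α in Set.Ioi (0:ℝ),
        Complex.exp (-(x:ℂ) * (Real.cosh α:ℂ) - 2*Complex.I*r*(α:ℂ)) with hHm
      set V : ℂ := Stmt17Aux.Vl x r 0 with hV
      field_simp
      ring_nf
    rw [show (-(4 * r / x) * ((Real.exp (-π * r) : ℝ) : ℂ) *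
        ∫ α in Set.Ioi (0:ℝ), Complex.exp (-x * Real.cosh α)
          * Complex.cosh (2 * Complex.I * r * α)) =
        Stmt17Aux.L x r + (starRingEnd ℂ) (Stmt17Aux.L x r) from heq]
    exact hsum
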